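/- Let J be a symmetric real 3×3 matrix and Ĵ = (1/2) tr(J) I - J. Then for any ω ∈ R^3, (ω × Jω)^× = (ω^×)² Ĵ - Ĵ (ω^×)². -/

import Mathlib

set_option maxHeartbeats 1000000


open Matrix

def hat (w : Fin 3 → ℝ) : Matrix (Fin 3) (Fin 3) ℝ :=
  !![0, -w 2, w 1; w 2, 0, -w 0; -w 1, w 0, 0]

noncomputable def enorm3 (w : Fin 3 → ℝ) : ℝ := Real.sqrt (w ⬝ᵥ w)

theorem hat_cross_J (J : Matrix (Fin 3) (Fin 3) ℝ) (hJ : Jᵀ = J) (ω : Fin 3 → ℝ) :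
    hat (ω ⨯₃ J.mulVec ω) =
      (hat ω) ^ 2 * ((1 / 2 * J.trace) • (1 : Matrix (Fin 3) (Fin 3) ℝ) - J)
        - ((1 / 2 * J.trace) • (1 : Matrix (Fin 3) (Fin 3) ℝ) - J) * (hat ω) ^ 2 := by
  have h01 : J 1 0 = J 0 1 := by conv_lhs => rw [← hJ, Matrix.transpose_apply]
  have h02 : J 2 0 = J 0 2 := by conv_lhs => rw [← hJ, Matrix.transpose_apply]
  have h12 : J 2 1 = J 1 2 := by conv_lhs => rw [← hJ, Matrix.transpose_apply]
  ext i j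
  fin_cases i <;> fin_cases j <;>
    simp [hat, crossProduct, mulVec, dotProduct, Matrix.mul_apply, pow_two, Matrix.vecMul, Matrix.sub_apply, Matrix.smul_apply, smul_eq_mul,
      Matrix.trace, Fin.sum_univ_three, Matrix.one_apply, h01, h02, h12] <;> ring
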